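/- Let Ω ⊆ ℝ² be open and let f, p, u : Ω → ℝ be differentiable. Consider the dust metric components g^d₁₁ = e^p, g^d₃₃ = x² − f², g^d₃₄ = −f, g^d₄₄ = −1 and the vacuum metric components g^v₁₁ = e^p·cosh(u), g^v₃₃ = x²·cosh(u) − f²/cosh(u), g^v₃₄ = −f/cosh(u), g^v₄₄ = −1/cosh(u), all as functions on Ω. Then at every point b ∈ Ω with u(b) = 0, each vacuum component has the same value and the same Fréchet derivative at b as the corresponding dust component: g^v₁₁ ≡¹ g^d₁₁, g^v₃₃ ≡¹ g^d₃₃, g^v₃₄ ≡¹ g^d₃₄, g^v₄₄ ≡¹ g^d₄₄ at b. -/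

import Mathlib

/-- First-order contact of two real functions at a point: equal values and
equal Fréchet derivatives. -/
def FirstOrderContactAt (f g : ℝ × ℝ → ℝ) (b : ℝ × ℝ) : Prop :=
  f b = g b ∧ fderiv ℝ f b = fderiv ℝ g b

/-- Multiplying by a function with value `1` and derivative `0` at `b` gives
first-order contact. -/
lemma mul_firstOrderContact (A φ : ℝ × ℝ → ℝ) (b : ℝ × ℝ)
    (hA : DifferentiableAt ℝ A b) (hφ : DifferentiableAt ℝ φ b)
    (hφ1 : φ b = 1) (hφ0 : fderiv ℝ φ b = 0) :
    FirstOrderContactAt (fun p => A p * φ p) A b := by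
  constructor
  · simp [hφ1]
  · rw [fderiv_fun_mul hA hφ, hφ1, hφ0, smul_zero, one_smul, zero_add]

/-- **The companion dust and vacuum metrics match along the boundary u = 0.**
The nontrivial coefficients of the van Stockum dust metric
`g^d = e^p (dx² + dy²) + x² dφ² − (f dφ + dt)²` and of its companion normalised
Papapetrou vacuum metric
`g^v = e^p cosh u (dx² + dy²) + x² cosh u dφ² − (f dφ + dt)²/cosh u`
have first-order contact at every point of `Ω` where `u = 0`. -/
theorem companion_metrics_match
    (Ω : Set (ℝ × ℝ)) (hΩ : IsOpen Ω)
    (f P u : ℝ × ℝ → ℝ)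
    (hf : ∀ p ∈ Ω, DifferentiableAt ℝ f p)
    (hP : ∀ p ∈ Ω, DifferentiableAt ℝ P p)
    (hu : ∀ p ∈ Ω, DifferentiableAt ℝ u p) :
    ∀ b ∈ Ω, u b = 0 →
      FirstOrderContactAt
        (fun p => Real.exp (P p) * Real.cosh (u p))
        (fun p => Real.exp (P p)) b ∧
      FirstOrderContactAt
        (fun p => p.1 ^ 2 * Real.cosh (u p) - f p ^ 2 / Real.cosh (u p))
        (fun p => p.1 ^ 2 - f p ^ 2) b ∧
      FirstOrderContactAt
        (fun p => -f p / Real.cosh (u p))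
        (fun p => -f p) b ∧
      FirstOrderContactAt
        (fun p => -1 / Real.cosh (u p))
        (fun _ => (-1 : ℝ)) b := by
  intro b hb hub
  have hub' : Real.cosh (u b) = 1 := by rw [hub, Real.cosh_zero]
  -- derivative of cosh ∘ u at b
  have hcosh : HasFDerivAt (fun p => Real.cosh (u p)) (0 : ℝ × ℝ →L[ℝ] ℝ) b := by
    have h := ((hu b hb).hasFDerivAt).cosh
    rwa [hub, Real.sinh_zero, zero_smul] at h
  have hcd : DifferentiableAt ℝ (fun p => Real.cosh (u p)) b := hcosh.differentiableAt
  have hcf : fderiv ℝ (fun p => Real.cosh (u p)) b = 0 := hcosh.fderiv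
  have hcne : Real.cosh (u b) ≠ 0 := (Real.cosh_pos (u b)).ne'
  -- derivative of (cosh ∘ u)⁻¹ at b
  have hid : DifferentiableAt ℝ (fun p => (Real.cosh (u p))⁻¹) b := hcd.inv hcne
  have hif : fderiv ℝ (fun p => (Real.cosh (u p))⁻¹) b = 0 := by
    have h := fderiv_comp (𝕜 := ℝ) b (differentiableAt_inv hcne) hcd
    rw [Function.comp_def] at h
    rw [h, hcf, ContinuousLinearMap.comp_zero]
  have hi1 : (Real.cosh (u b))⁻¹ = 1 := by rw [hub']; norm_num
  -- differentiability of basic pieces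
  have hx2 : DifferentiableAt ℝ (fun p : ℝ × ℝ => p.1 ^ 2) b :=
    (differentiableAt_fst.pow 2)
  have hf2 : DifferentiableAt ℝ (fun p => f p ^ 2) b := (hf b hb).pow 2
  have hexp : DifferentiableAt ℝ (fun p => Real.exp (P p)) b := (hP b hb).exp
  -- contacts for products
  have c1 := mul_firstOrderContact (fun p => Real.exp (P p)) _ b hexp hcd hub' hcf
  have c2a := mul_firstOrderContact (fun p : ℝ × ℝ => p.1 ^ 2) _ b hx2 hcd hub' hcf
  have c2b := mul_firstOrderContact (fun p => f p ^ 2) _ b hf2 hid hi1 hif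
  have c3 := mul_firstOrderContact (fun p => -f p) _ b (hf b hb).neg hid hi1 hif
  have c4 := mul_firstOrderContact (fun _ : ℝ × ℝ => (-1 : ℝ)) _ b
    (differentiableAt_const _) hid hi1 hif
  refine ⟨c1, ?_, ?_, ?_⟩
  · -- component 33
    constructor
    · simp [hub']
    · have hsub : fderiv ℝ
          (fun p => p.1 ^ 2 * Real.cosh (u p) - f p ^ 2 / Real.cosh (u p)) b
          = fderiv ℝ (fun p => p.1 ^ 2 * Real.cosh (u p)) b
            - fderiv ℝ (fun p => f p ^ 2 / Real.cosh (u p)) b := by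
        apply fderiv_fun_sub (hx2.mul hcd)
        simpa [div_eq_mul_inv] using hf2.fun_mul hid
      have hsub' : fderiv ℝ (fun p => p.1 ^ 2 - f p ^ 2) b
          = fderiv ℝ (fun p : ℝ × ℝ => p.1 ^ 2) b - fderiv ℝ (fun p => f p ^ 2) b :=
        fderiv_fun_sub hx2 hf2
      rw [hsub, hsub', c2a.2]
      congr 1
      have : (fun p => f p ^ 2 / Real.cosh (u p))
          = fun p => f p ^ 2 * (Real.cosh (u p))⁻¹ := by
        funext p; rw [div_eq_mul_inv]
      rw [this, c2b.2]
  · -- component 34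
    have : (fun p => -f p / Real.cosh (u p))
        = fun p => -f p * (Real.cosh (u p))⁻¹ := by
      funext p; rw [div_eq_mul_inv]
    rw [this]; exact c3
  · -- component 44
    have : (fun p : ℝ × ℝ => -1 / Real.cosh (u p))
        = fun p => (-1 : ℝ) * (Real.cosh (u p))⁻¹ := by
      funext p; rw [div_eq_mul_inv]
    rw [this]; exact c4
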